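/- Let (A, B) be a two-player weighted potential game with potential φ and weights w₁, w₂ > 0, and let (x, y) be a trajectory of the two-player SQL dynamics for parameters α₁, α₂ ∈ [0,1), β₁, β₂ > 0. Define the modified potential Φ^H(x,y) := ∑_{i,j} φ_{ij} x_i y_j + δ₁ H(x) + δ₂ H(y), where δ₁ = α₁/(β₁ w₁), δ₂ = α₂/(β₂ w₂), and H(z) = −∑_l z_l ln z_l. Then the function t ↦ Φ^H(x(t), y(t)) is differentiable with nonnegative derivative at every t ≥ 0, and its derivative at t equals 0 if and only if x'(t) = 0 and y'(t) = 0, i.e., if and only if (x(t), y(t)) is a fixed point of the SQL dynamics. -/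

import Mathlib

open Filter Real

/-- **The modified potential is a Lyapunov function for two-player SQL dynamics.**
Along a trajectory `(x, y)` of the two-player smooth Q-learning dynamics in a
weighted potential game with potential `φ` and weights `w₁, w₂ > 0`, the
modified potential
`Φ^H(x,y) = ∑_{i,j} φ_{ij} x_i y_j + δ₁ H(x) + δ₂ H(y)` with
`δ₁ = α₁/(β₁ w₁)`, `δ₂ = α₂/(β₂ w₂)` and `H(z) = −∑ z_l ln z_l` is
differentiable in time with nonnegative derivative at every `t ≥ 0`, and its
derivative vanishes exactly at fixed points of the dynamics. -/
theorem sql_modified_potential_lyapunov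
    {ι₁ ι₂ : Type*} [Fintype ι₁] [Fintype ι₂] [Nonempty ι₁] [Nonempty ι₂]
    (A B φ : ι₁ → ι₂ → ℝ) (w₁ w₂ : ℝ) (hw₁ : 0 < w₁) (hw₂ : 0 < w₂)
    (hpotA : ∀ i i' j, A i j - A i' j = w₁ * (φ i j - φ i' j))
    (hpotB : ∀ i j j', B i j - B i j' = w₂ * (φ i j - φ i j'))
    (α₁ α₂ β₁ β₂ : ℝ)
    (hα₁₀ : 0 ≤ α₁) (hα₁₁ : α₁ < 1) (hα₂₀ : 0 ≤ α₂) (hα₂₁ : α₂ < 1)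
    (hβ₁ : 0 < β₁) (hβ₂ : 0 < β₂)
    (x : ℝ → ι₁ → ℝ) (y : ℝ → ι₂ → ℝ)
    (hxdiff : ∀ i, Differentiable ℝ fun t => x t i)
    (hydiff : ∀ j, Differentiable ℝ fun t => y t j)
    (hxpos : ∀ t ≥ (0 : ℝ), ∀ i, 0 < x t i)
    (hypos : ∀ t ≥ (0 : ℝ), ∀ j, 0 < y t j)
    (hxsum : ∀ t ≥ (0 : ℝ), ∑ i, x t i = 1)
    (hysum : ∀ t ≥ (0 : ℝ), ∑ j, y t j = 1)
    (hodex : ∀ t ≥ (0 : ℝ), ∀ i, deriv (fun s => x s i) t =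
      x t i * (β₁ * ((∑ j, A i j * y t j) - ∑ i', ∑ j, x t i' * A i' j * y t j)
        - α₁ * (Real.log (x t i) - ∑ i', x t i' * Real.log (x t i'))))
    (hodey : ∀ t ≥ (0 : ℝ), ∀ j, deriv (fun s => y s j) t =
      y t j * (β₂ * ((∑ i, x t i * B i j) - ∑ i, ∑ j', x t i * B i j' * y t j')
        - α₂ * (Real.log (y t j) - ∑ j', y t j' * Real.log (y t j')))) :
    ∀ t ≥ (0 : ℝ),
      DifferentiableAt ℝ (fun s =>
        (∑ i, ∑ j, φ i j * x s i * y s j)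
          + (α₁ / (β₁ * w₁)) * (-∑ i, x s i * Real.log (x s i))
          + (α₂ / (β₂ * w₂)) * (-∑ j, y s j * Real.log (y s j))) t ∧
      0 ≤ deriv (fun s =>
        (∑ i, ∑ j, φ i j * x s i * y s j)
          + (α₁ / (β₁ * w₁)) * (-∑ i, x s i * Real.log (x s i))
          + (α₂ / (β₂ * w₂)) * (-∑ j, y s j * Real.log (y s j))) t ∧
      (deriv (fun s =>
        (∑ i, ∑ j, φ i j * x s i * y s j)
          + (α₁ / (β₁ * w₁)) * (-∑ i, x s i * Real.log (x s i))
          + (α₂ / (β₂ * w₂)) * (-∑ j, y s j * Real.log (y s j))) t = 0 ↔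
        ((∀ i, deriv (fun s => x s i) t = 0) ∧ (∀ j, deriv (fun s => y s j) t = 0))) := by
  intro t ht
  classical
  have hxp : ∀ i, 0 < x t i := hxpos t ht
  have hyp : ∀ j, 0 < y t j := hypos t ht
  have hxs := hxsum t ht
  have hys := hysum t ht
  have hc₁ : (0:ℝ) < β₁ * w₁ := mul_pos hβ₁ hw₁
  have hc₂ : (0:ℝ) < β₂ * w₂ := mul_pos hβ₂ hw₂
  set δ₁ : ℝ := α₁ / (β₁ * w₁) with hδ₁
  set δ₂ : ℝ := α₂ / (β₂ * w₂) with hδ₂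
  set g : ι₁ → ℝ := fun i => (∑ j, φ i j * y t j) - δ₁ * Real.log (x t i) with hgdef
  set k : ι₂ → ℝ := fun j => (∑ i, φ i j * x t i) - δ₂ * Real.log (y t j) with hkdef
  set gb : ℝ := ∑ i, x t i * g i with hgbdef
  set kb : ℝ := ∑ j, y t j * k j with hkbdef
  have hα₁' : α₁ = δ₁ * (β₁ * w₁) := by
    rw [hδ₁, div_mul_cancel₀ _ (ne_of_gt hc₁)]
  have hα₂' : α₂ = δ₂ * (β₂ * w₂) := by
    rw [hδ₂, div_mul_cancel₀ _ (ne_of_gt hc₂)]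
  -- key reformulation of the x-ODE
  have keyx : ∀ i, deriv (fun s => x s i) t = β₁ * w₁ * (x t i * (g i - gb)) := by
    intro i
    rw [hodex t ht i]
    have e1 : ∑ i', ∑ j, x t i' * A i' j * y t j
        = ∑ i', x t i' * ∑ j, A i' j * y t j := by
      refine Finset.sum_congr rfl fun i' _ => ?_
      rw [Finset.mul_sum]
      exact Finset.sum_congr rfl fun j _ => by ring
    have e3 : ∀ i', (∑ j, A i j * y t j) - (∑ j, A i' j * y t j)
        = w₁ * ((∑ j, φ i j * y t j) - (∑ j, φ i' j * y t j)) := by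
      intro i'
      rw [← Finset.sum_sub_distrib, ← Finset.sum_sub_distrib, Finset.mul_sum]
      refine Finset.sum_congr rfl fun j _ => ?_
      rw [← sub_mul, ← sub_mul, hpotA i i' j]
      ring
    have l1 : (∑ j, A i j * y t j) - ∑ i', x t i' * ∑ j, A i' j * y t j
        = ∑ i', x t i' * ((∑ j, A i j * y t j) - ∑ j, A i' j * y t j) := by
      simp only [mul_sub, Finset.sum_sub_distrib, ← Finset.sum_mul, hxs, one_mul]
    have l2 : w₁ * ((∑ j, φ i j * y t j) - ∑ i', x t i' * ∑ j, φ i' j * y t j)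
        = ∑ i', x t i' * (w₁ * ((∑ j, φ i j * y t j) - ∑ j, φ i' j * y t j)) := by
      simp only [mul_sub, Finset.sum_sub_distrib, ← Finset.sum_mul, hxs, one_mul]
      congr 1
      rw [Finset.mul_sum]
      exact Finset.sum_congr rfl fun i' _ => by ring
    have e2 : (∑ j, A i j * y t j) - ∑ i', ∑ j, x t i' * A i' j * y t j
        = w₁ * ((∑ j, φ i j * y t j) - ∑ i', x t i' * ∑ j, φ i' j * y t j) := by
      rw [e1, l1, l2]
      exact Finset.sum_congr rfl fun i' _ => by rw [e3 i']
    have egb : gb = (∑ i', x t i' * ∑ j, φ i' j * y t j)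
        - δ₁ * ∑ i', x t i' * Real.log (x t i') := by
      rw [hgbdef]
      simp only [hgdef, mul_sub, Finset.sum_sub_distrib]
      congr 1
      rw [Finset.mul_sum]
      exact Finset.sum_congr rfl fun i' _ => by ring
    rw [e2, egb]
    simp only [hgdef]
    rw [hα₁']
    ring
  -- key reformulation of the y-ODE
  have keyy : ∀ j, deriv (fun s => y s j) t = β₂ * w₂ * (y t j * (k j - kb)) := by
    intro j
    rw [hodey t ht j]
    have e1 : ∑ i, ∑ j', x t i * B i j' * y t j'
        = ∑ j', y t j' * ∑ i, x t i * B i j' := by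
      rw [Finset.sum_comm]
      refine Finset.sum_congr rfl fun j' _ => ?_
      rw [Finset.mul_sum]
      exact Finset.sum_congr rfl fun i _ => by ring
    have e3 : ∀ j', (∑ i, x t i * B i j) - (∑ i, x t i * B i j')
        = w₂ * ((∑ i, φ i j * x t i) - (∑ i, φ i j' * x t i)) := by
      intro j'
      rw [← Finset.sum_sub_distrib, ← Finset.sum_sub_distrib, Finset.mul_sum]
      refine Finset.sum_congr rfl fun i _ => ?_
      rw [← mul_sub, ← sub_mul, hpotB i j j']
      ring
    have l1 : (∑ i, x t i * B i j) - ∑ j', y t j' * ∑ i, x t i * B i j'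
        = ∑ j', y t j' * ((∑ i, x t i * B i j) - ∑ i, x t i * B i j') := by
      simp only [mul_sub, Finset.sum_sub_distrib, ← Finset.sum_mul, hys, one_mul]
    have l2 : w₂ * ((∑ i, φ i j * x t i) - ∑ j', y t j' * ∑ i, φ i j' * x t i)
        = ∑ j', y t j' * (w₂ * ((∑ i, φ i j * x t i) - ∑ i, φ i j' * x t i)) := by
      simp only [mul_sub, Finset.sum_sub_distrib, ← Finset.sum_mul, hys, one_mul]
      congr 1
      rw [Finset.mul_sum]
      exact Finset.sum_congr rfl fun j' _ => by ring
    have e2 : (∑ i, x t i * B i j) - ∑ i, ∑ j', x t i * B i j' * y t j'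
        = w₂ * ((∑ i, φ i j * x t i) - ∑ j', y t j' * ∑ i, φ i j' * x t i) := by
      rw [e1, l1, l2]
      exact Finset.sum_congr rfl fun j' _ => by rw [e3 j']
    have ekb : kb = (∑ j', y t j' * ∑ i, φ i j' * x t i)
        - δ₂ * ∑ j', y t j' * Real.log (y t j') := by
      rw [hkbdef]
      simp only [hkdef, mul_sub, Finset.sum_sub_distrib]
      congr 1
      rw [Finset.mul_sum]
      exact Finset.sum_congr rfl fun j' _ => by ring
    rw [e2, ekb]
    simp only [hkdef]
    rw [hα₂']
    ring
  have hzx : ∑ i, x t i * (g i - gb) = 0 := by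
    simp only [mul_sub, Finset.sum_sub_distrib, ← Finset.sum_mul, hxs, one_mul,
      ← hgbdef, sub_self]
  have hzy : ∑ j, y t j * (k j - kb) = 0 := by
    simp only [mul_sub, Finset.sum_sub_distrib, ← Finset.sum_mul, hys, one_mul,
      ← hkbdef, sub_self]
  have hdzx : ∑ i, deriv (fun s => x s i) t = 0 := by
    calc ∑ i, deriv (fun s => x s i) t
        = ∑ i, β₁ * w₁ * (x t i * (g i - gb)) :=
          Finset.sum_congr rfl fun i _ => keyx i
      _ = β₁ * w₁ * ∑ i, x t i * (g i - gb) := by rw [Finset.mul_sum]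
      _ = 0 := by rw [hzx, mul_zero]
  have hdzy : ∑ j, deriv (fun s => y s j) t = 0 := by
    calc ∑ j, deriv (fun s => y s j) t
        = ∑ j, β₂ * w₂ * (y t j * (k j - kb)) :=
          Finset.sum_congr rfl fun j _ => keyy j
      _ = β₂ * w₂ * ∑ j, y t j * (k j - kb) := by rw [Finset.mul_sum]
      _ = 0 := by rw [hzy, mul_zero]
  -- differentiability of the modified potential
  have hxd : ∀ i, HasDerivAt (fun s => x s i) (deriv (fun s => x s i) t) t :=
    fun i => (hxdiff i t).hasDerivAt
  have hyd : ∀ j, HasDerivAt (fun s => y s j) (deriv (fun s => y s j) t) t :=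
    fun j => (hydiff j t).hasDerivAt
  have hDA : HasDerivAt (fun s => ∑ i, ∑ j, φ i j * x s i * y s j)
      (∑ i, ∑ j, (φ i j * deriv (fun s => x s i) t * y t j
        + φ i j * x t i * deriv (fun s => y s j) t)) t := by
    refine HasDerivAt.fun_sum fun i _ => HasDerivAt.fun_sum fun j _ => ?_
    have h1 := ((hxd i).const_mul (φ i j)).fun_mul (hyd j)
    convert h1 using 1
  have hDHx : HasDerivAt (fun s => -∑ i, x s i * Real.log (x s i))
      (-∑ i, (deriv (fun s => x s i) t * Real.log (x t i)
        + deriv (fun s => x s i) t)) t := by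
    refine HasDerivAt.neg (HasDerivAt.fun_sum fun i _ => ?_)
    have hlog := (hxd i).log (ne_of_gt (hxp i))
    have h1 := (hxd i).fun_mul hlog
    have hne : x t i ≠ 0 := ne_of_gt (hxp i)
    rw [mul_div_cancel₀ _ hne] at h1
    exact h1
  have hDHy : HasDerivAt (fun s => -∑ j, y s j * Real.log (y s j))
      (-∑ j, (deriv (fun s => y s j) t * Real.log (y t j)
        + deriv (fun s => y s j) t)) t := by
    refine HasDerivAt.neg (HasDerivAt.fun_sum fun j _ => ?_)
    have hlog := (hyd j).log (ne_of_gt (hyp j))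
    have h1 := (hyd j).fun_mul hlog
    have hne : y t j ≠ 0 := ne_of_gt (hyp j)
    rw [mul_div_cancel₀ _ hne] at h1
    exact h1
  have hFd : HasDerivAt (fun s =>
      (∑ i, ∑ j, φ i j * x s i * y s j)
        + δ₁ * (-∑ i, x s i * Real.log (x s i))
        + δ₂ * (-∑ j, y s j * Real.log (y s j)))
      ((∑ i, ∑ j, (φ i j * deriv (fun s => x s i) t * y t j
          + φ i j * x t i * deriv (fun s => y s j) t))
        + δ₁ * (-∑ i, (deriv (fun s => x s i) t * Real.log (x t i)
          + deriv (fun s => x s i) t))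
        + δ₂ * (-∑ j, (deriv (fun s => y s j) t * Real.log (y t j)
          + deriv (fun s => y s j) t))) t :=
    (hDA.add (hDHx.const_mul δ₁)).add (hDHy.const_mul δ₂)
  -- value of the derivative
  have piece1 : (∑ i, ∑ j, (φ i j * deriv (fun s => x s i) t * y t j
      + φ i j * x t i * deriv (fun s => y s j) t))
      = (∑ i, deriv (fun s => x s i) t * ∑ j, φ i j * y t j)
        + (∑ j, deriv (fun s => y s j) t * ∑ i, φ i j * x t i) := by
    simp only [Finset.sum_add_distrib]
    congr 1
    · refine Finset.sum_congr rfl fun i _ => ?_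
      rw [Finset.mul_sum]
      exact Finset.sum_congr rfl fun j _ => by ring
    · rw [Finset.sum_comm]
      refine Finset.sum_congr rfl fun j _ => ?_
      rw [Finset.mul_sum]
      exact Finset.sum_congr rfl fun i _ => by ring
  have piece2x : (-∑ i, (deriv (fun s => x s i) t * Real.log (x t i)
      + deriv (fun s => x s i) t))
      = -∑ i, deriv (fun s => x s i) t * Real.log (x t i) := by
    rw [Finset.sum_add_distrib, hdzx, add_zero]
  have piece2y : (-∑ j, (deriv (fun s => y s j) t * Real.log (y t j)
      + deriv (fun s => y s j) t))
      = -∑ j, deriv (fun s => y s j) t * Real.log (y t j) := by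
    rw [Finset.sum_add_distrib, hdzy, add_zero]
  have piece3x : (∑ i, deriv (fun s => x s i) t * ∑ j, φ i j * y t j)
      - δ₁ * ∑ i, deriv (fun s => x s i) t * Real.log (x t i)
      = ∑ i, deriv (fun s => x s i) t * g i := by
    simp only [hgdef]
    rw [Finset.mul_sum, ← Finset.sum_sub_distrib]
    exact Finset.sum_congr rfl fun i _ => by ring
  have piece3y : (∑ j, deriv (fun s => y s j) t * ∑ i, φ i j * x t i)
      - δ₂ * ∑ j, deriv (fun s => y s j) t * Real.log (y t j)
      = ∑ j, deriv (fun s => y s j) t * k j := by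
    simp only [hkdef]
    rw [Finset.mul_sum, ← Finset.sum_sub_distrib]
    exact Finset.sum_congr rfl fun j _ => by ring
  have piece4x : ∑ i, deriv (fun s => x s i) t * g i
      = β₁ * w₁ * ∑ i, x t i * (g i - gb) ^ 2 := by
    have e : ∀ i, deriv (fun s => x s i) t * g i
        = β₁ * w₁ * (x t i * (g i - gb) ^ 2)
          + (β₁ * w₁ * gb) * (x t i * (g i - gb)) := by
      intro i; rw [keyx i]; ring
    rw [Finset.sum_congr rfl fun i _ => e i, Finset.sum_add_distrib,
      ← Finset.mul_sum, ← Finset.mul_sum, hzx, mul_zero, add_zero]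
  have piece4y : ∑ j, deriv (fun s => y s j) t * k j
      = β₂ * w₂ * ∑ j, y t j * (k j - kb) ^ 2 := by
    have e : ∀ j, deriv (fun s => y s j) t * k j
        = β₂ * w₂ * (y t j * (k j - kb) ^ 2)
          + (β₂ * w₂ * kb) * (y t j * (k j - kb)) := by
      intro j; rw [keyy j]; ring
    rw [Finset.sum_congr rfl fun j _ => e j, Finset.sum_add_distrib,
      ← Finset.mul_sum, ← Finset.mul_sum, hzy, mul_zero, add_zero]
  have hderiv : deriv (fun s =>
      (∑ i, ∑ j, φ i j * x s i * y s j)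
        + δ₁ * (-∑ i, x s i * Real.log (x s i))
        + δ₂ * (-∑ j, y s j * Real.log (y s j))) t
      = β₁ * w₁ * (∑ i, x t i * (g i - gb) ^ 2)
        + β₂ * w₂ * (∑ j, y t j * (k j - kb) ^ 2) := by
    rw [hFd.deriv, piece1, piece2x, piece2y]
    have rearr : ∀ a b c d e f : ℝ,
        (a + b) + e * (-c) + f * (-d) = (a - e * c) + (b - f * d) := by
      intros; ring
    rw [rearr, piece3x, piece3y, piece4x, piece4y]
  have hS₁ : 0 ≤ ∑ i, x t i * (g i - gb) ^ 2 :=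
    Finset.sum_nonneg fun i _ => mul_nonneg (hxp i).le (sq_nonneg _)
  have hS₂ : 0 ≤ ∑ j, y t j * (k j - kb) ^ 2 :=
    Finset.sum_nonneg fun j _ => mul_nonneg (hyp j).le (sq_nonneg _)
  refine ⟨hFd.differentiableAt, ?_, ?_⟩
  · rw [hderiv]
    exact add_nonneg (mul_nonneg hc₁.le hS₁) (mul_nonneg hc₂.le hS₂)
  · rw [hderiv]
    constructor
    · intro h0
      have hA0 : 0 ≤ β₁ * w₁ * (∑ i, x t i * (g i - gb) ^ 2) :=
        mul_nonneg hc₁.le hS₁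
      have hB0 : 0 ≤ β₂ * w₂ * (∑ j, y t j * (k j - kb) ^ 2) :=
        mul_nonneg hc₂.le hS₂
      have h1 : β₁ * w₁ * (∑ i, x t i * (g i - gb) ^ 2) = 0 ∧
          β₂ * w₂ * (∑ j, y t j * (k j - kb) ^ 2) = 0 := by
        constructor <;> linarith
      have hS₁0 : (∑ i, x t i * (g i - gb) ^ 2) = 0 :=
        (mul_eq_zero.mp h1.1).resolve_left (ne_of_gt hc₁)
      have hS₂0 : (∑ j, y t j * (k j - kb) ^ 2) = 0 :=
        (mul_eq_zero.mp h1.2).resolve_left (ne_of_gt hc₂)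
      constructor
      · intro i
        have hterm : x t i * (g i - gb) ^ 2 = 0 :=
          (Finset.sum_eq_zero_iff_of_nonneg
            (fun i _ => mul_nonneg (hxp i).le (sq_nonneg _))).mp hS₁0 i
            (Finset.mem_univ i)
        have h2 : g i - gb = 0 := by
          rcases mul_eq_zero.mp hterm with h' | h'
          · exact absurd h' (ne_of_gt (hxp i))
          · exact sq_eq_zero_iff.mp h'
        rw [keyx i, h2, mul_zero, mul_zero]
      · intro j
        have hterm : y t j * (k j - kb) ^ 2 = 0 :=
          (Finset.sum_eq_zero_iff_of_nonneg
            (fun j _ => mul_nonneg (hyp j).le (sq_nonneg _))).mp hS₂0 j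
            (Finset.mem_univ j)
        have h2 : k j - kb = 0 := by
          rcases mul_eq_zero.mp hterm with h' | h'
          · exact absurd h' (ne_of_gt (hyp j))
          · exact sq_eq_zero_iff.mp h'
        rw [keyy j, h2, mul_zero, mul_zero]
    · rintro ⟨hx0, hy0⟩
      have hS₁0 : (∑ i, x t i * (g i - gb) ^ 2) = 0 := by
        refine Finset.sum_eq_zero fun i _ => ?_
        have h' := hx0 i
        rw [keyx i] at h'
        have h2 : x t i * (g i - gb) = 0 :=
          (mul_eq_zero.mp h').resolve_left (ne_of_gt hc₁)
        have h3 : g i - gb = 0 :=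
          (mul_eq_zero.mp h2).resolve_left (ne_of_gt (hxp i))
        rw [h3]; ring
      have hS₂0 : (∑ j, y t j * (k j - kb) ^ 2) = 0 := by
        refine Finset.sum_eq_zero fun j _ => ?_
        have h' := hy0 j
        rw [keyy j] at h'
        have h2 : y t j * (k j - kb) = 0 :=
          (mul_eq_zero.mp h').resolve_left (ne_of_gt hc₂)
        have h3 : k j - kb = 0 :=
          (mul_eq_zero.mp h2).resolve_left (ne_of_gt (hyp j))
        rw [h3]; ring
      rw [hS₁0, hS₂0, mul_zero, mul_zero, add_zero]
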